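/- Let μ be a critical non-trivial offspring distribution (μ(0) > 0 and ∑_k kμ(k) = 1) and τ a Galton–Watson tree with offspring law μ. For all integers n, m ≥ 2, P(#τ ≤ n and sup_i |H_i(τ) - H_{i+1}(τ)| ≥ m) ≤ n·(1 - μ(0))^m, where H_i(τ) = |u_i(τ)| is the height of the i-th vertex of τ in depth-first (lexicographic) order, with H_i(τ) = 0 for i ≥ #τ. -/

import Mathlib

open MeasureTheory

/-- Finite rooted plane trees. -/
inductive PTree : Type where
  | node : List PTree → PTree

namespace PTree

/-- Number of vertices. -/
def size : PTree → ℕ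
  | node ts => 1 + (ts.attach.map (fun s => size s.1)).sum
decreasing_by simp_wf; have := List.sizeOf_lt_of_mem s.2; first | omega | (simp only [List.cons.sizeOf_spec] at this ⊢; omega) | (simp_all; omega)

/-- The list of the heights of the vertices, in depth-first (lexicographic) order. -/
def heightList : PTree → List ℕ
  | node ts => 0 :: (ts.attach.map (fun s => (heightList s.1).map (· + 1))).flatten
decreasing_by simp_wf; have := List.sizeOf_lt_of_mem s.2; first | omega | (simp only [List.cons.sizeOf_spec] at this ⊢; omega) | (simp_all; omega)

/-- `H_i(t)`: the height of the `i`-th vertex in depth-first order, and `0` for `i ≥ #t`. -/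
def H (t : PTree) (i : ℕ) : ℕ := (heightList t).getD i 0

end PTree

/-- `PTree` is a countable type; we equip it with the discrete σ-algebra. -/
instance : MeasurableSpace PTree := ⊤


namespace PTree

/-- Height of the rightmost spine. -/
def R : PTree → ℕ
  | node [] => 0
  | node (t :: ts) => R ((t :: ts).getLast (List.cons_ne_nil t ts)) + 1
decreasing_by
  have := List.sizeOf_lt_of_mem (List.getLast_mem (List.cons_ne_nil t ts))
  simp only [PTree.node.sizeOf_spec, List.cons.sizeOf_spec] at *; omega

/-- Number of vertices at height `h` whose subtree has rightmost spine of height `≥ m`. -/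
def B (m : ℕ) : ℕ → PTree → ℕ
  | 0, t => if m ≤ R t then 1 else 0
  | h+1, node ts => (ts.attach.map (fun s => B m h s.1)).sum

lemma heightList_node (ts : List PTree) :
    heightList (node ts) = 0 :: (ts.map (fun s => (heightList s).map (· + 1))).flatten := by
  rw [heightList]
  congr 1
  exact congrArg List.flatten (List.attach_map_val (l := ts) (f := fun s => (heightList s).map (· + 1)))

lemma B_succ (m h : ℕ) (ts : List PTree) :
    B m (h+1) (node ts) = (ts.map (B m h)).sum := by
  rw [B]
  exact congrArg List.sum (List.attach_map_val (l := ts) (f := B m h))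

lemma B_zero (m : ℕ) (t : PTree) : B m 0 t = if m ≤ R t then 1 else 0 := by rw [B]

lemma heightList_ne_nil (t : PTree) : heightList t ≠ [] := by
  cases t with | node ts => rw [heightList_node]; simp

/-- The forest part of the height list. -/
def F (ts : List PTree) : List ℕ := (ts.map (fun s => (heightList s).map (· + 1))).flatten

lemma heightList_node' (ts : List PTree) : heightList (node ts) = 0 :: F ts := heightList_node ts

lemma H_zero (t : PTree) : H t 0 = 0 := by
  cases t with | node ts => rw [H, heightList_node']; rfl

lemma H_succ (ts : List PTree) (j : ℕ) : H (node ts) (j+1) = (F ts).getD j 0 := by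
  rw [H, heightList_node']; rfl

lemma F_cons (t : PTree) (rest : List PTree) :
    F (t :: rest) = (heightList t).map (· + 1) ++ F rest := by
  rw [F, List.map_cons, List.flatten_cons]; rfl

lemma getD_map_add_one (l : List ℕ) (j : ℕ) (hj : j < l.length) :
    (l.map (· + 1)).getD j 0 = l.getD j 0 + 1 := by
  rw [List.getD_eq_getElem _ _ (by simpa using hj), List.getD_eq_getElem _ _ hj, List.getElem_map]

end PTree
namespace PTree

lemma ind' {motive : PTree → Prop}
    (h : ∀ ts, (∀ t ∈ ts, motive t) → motive (node ts)) : ∀ t, motive t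
  | node ts => h ts (fun t ht => ind' h t)
decreasing_by
  have := List.sizeOf_lt_of_mem ht
  simp only [PTree.node.sizeOf_spec] at *; omega

lemma size_node (ts : List PTree) : size (node ts) = 1 + (ts.map size).sum := by
  rw [size]
  exact congrArg (1 + ·) (congrArg List.sum (List.attach_map_val (l := ts) (f := size)))

lemma R_node (l : List PTree) (h : l ≠ []) : R (node l) = R (l.getLast h) + 1 := by
  cases l with
  | nil => exact absurd rfl h
  | cons t ts => rw [R]

lemma length_heightList : ∀ t : PTree, (heightList t).length = size t := by
  refine ind' (fun ts ih => ?_)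
  rw [heightList_node', size_node]
  simp only [List.length_cons]
  have : (F ts).length = (ts.map size).sum := by
    induction ts with
    | nil => rfl
    | cons t rest ihl =>
      rw [F_cons, List.length_append, List.length_map, ih t (by simp),
        ihl (fun s hs => ih s (by simp [hs]))]
      simp
  omega

lemma one_le_length_heightList (t : PTree) : 1 ≤ (heightList t).length :=
  List.length_pos_iff.mpr (heightList_ne_nil t)

lemma H_eq_zero_of_le (t : PTree) {i : ℕ} (hi : (heightList t).length ≤ i) : H t i = 0 :=
  List.getD_eq_default _ _ hi

lemma lt_length_of_H_pos (t : PTree) {i : ℕ} (hi : 1 ≤ H t i) : i < (heightList t).length := by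
  by_contra hc
  rw [H_eq_zero_of_le t (le_of_not_gt hc)] at hi
  omega

lemma head_F_le_one (ts : List PTree) : (F ts).getD 0 0 ≤ 1 := by
  cases ts with
  | nil => simp [F]
  | cons t rest =>
    rw [F_cons, List.getD_append _ _ _ _ (by rw [List.length_map]; exact one_le_length_heightList t),
      getD_map_add_one _ _ (one_le_length_heightList t)]
    have := H_zero t
    rw [H] at this
    omega

lemma step_F (ts : List PTree) (hts : ∀ t ∈ ts, ∀ i, H t (i+1) ≤ H t i + 1) :
    ∀ j, (F ts).getD (j+1) 0 ≤ (F ts).getD j 0 + 1 := by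
  induction ts with
  | nil => intro j; simp [F]
  | cons t rest ihl =>
    intro j
    have hL : 1 ≤ (heightList t).length := one_le_length_heightList t
    set L := ((heightList t).map (· + 1)).length with hLdef
    have hLL : L = (heightList t).length := by simp [hLdef]
    rw [F_cons]
    rcases lt_trichotomy (j+1) L with h1 | h1 | h1
    · rw [List.getD_append _ _ _ _ h1, List.getD_append _ _ _ _ (by omega),
        getD_map_add_one _ _ (by omega), getD_map_add_one _ _ (by omega)]
      have := hts t (by simp) j
      rw [H, H] at this
      omega
    · rw [List.getD_append_right _ _ _ _ (le_of_eq h1.symm),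
        List.getD_append _ _ _ _ (by omega), h1, Nat.sub_self]
      have := head_F_le_one rest
      omega
    · rw [List.getD_append_right _ _ _ _ (by omega), List.getD_append_right _ _ _ _ (by omega)]
      have hj : j + 1 - L = (j - L) + 1 := by omega
      rw [hj]
      exact ihl (fun s hs => hts s (by simp [hs])) (j - L)

lemma H_step : ∀ (t : PTree) (i : ℕ), H t (i+1) ≤ H t i + 1 := by
  refine ind' (fun ts ih => fun i => ?_)
  cases i with
  | zero =>
    rw [H_zero, H_succ]
    have := head_F_le_one ts
    omega
  | succ j =>
    rw [H_succ, H_succ]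
    exact step_F ts ih j

lemma H_le_self (t : PTree) : ∀ i, H t i ≤ i := by
  intro i
  induction i with
  | zero => exact le_of_eq (H_zero t)
  | succ j ihj => have := H_step t j; omega

lemma F_concat (init : List PTree) (t' : PTree) :
    F (init ++ [t']) = F init ++ (heightList t').map (· + 1) := by
  rw [F, List.map_append, List.flatten_append]
  simp [F]

lemma H_last : ∀ t : PTree, H t ((heightList t).length - 1) = R t := by
  refine ind' (fun ts ih => ?_)
  rcases List.eq_nil_or_concat ts with rfl | ⟨init, t', rfl⟩
  · have h0 : (heightList (node ([]:List PTree))).length - 1 = 0 := by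
      rw [heightList_node']; simp [F]
    rw [h0, H_zero, R]
  · rw [show init.concat t' = init ++ [t'] from List.concat_eq_append] at ih ⊢
    have hne : init ++ [t'] ≠ [] := by simp
    have ht' : t' ∈ init ++ [t'] := by simp
    have hg : 1 ≤ (heightList t').length := one_le_length_heightList t'
    have hlen : (heightList (node (init ++ [t']))).length
        = 1 + (F init).length + (heightList t').length := by
      rw [heightList_node', F_concat]; simp; omega
    have e1 : (heightList (node (init ++ [t']))).length - 1
        = ((F init).length + (heightList t').length - 1) + 1 := by omega
    rw [e1, H_succ, F_concat, List.getD_append_right _ _ _ _ (by omega),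
      show (F init).length + (heightList t').length - 1 - (F init).length
        = (heightList t').length - 1 from by omega,
      getD_map_add_one _ _ (by omega), ← H, ih t' ht', R_node _ hne, List.getLast_concat]

end PTree
namespace PTree

lemma le_sum_map {f : PTree → ℕ} : ∀ {l : List PTree} {t : PTree}, t ∈ l → f t ≤ (l.map f).sum := by
  intro l
  induction l with
  | nil => intro t ht; cases ht
  | cons a as ihl =>
    intro t ht
    rcases List.mem_cons.mp ht with rfl | ht
    · simp
    · have := ihl ht
      simp only [List.map_cons, List.sum_cons]
      omega

lemma F_entry_pos (ts : List PTree) (j : ℕ) (hj : j < (F ts).length) : 1 ≤ (F ts).getD j 0 := by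
  unfold F at hj ⊢
  rw [List.getD_eq_getElem _ _ hj]
  have hmem := List.getElem_mem hj
  rcases List.mem_flatten.mp hmem with ⟨l, hl, hx⟩
  rcases List.mem_map.mp hl with ⟨s, _, rfl⟩
  rcases List.mem_map.mp hx with ⟨x, _, hxe⟩
  omega

lemma F_nil : F ([] : List PTree) = [] := rfl

lemma getD_F_cons_lt (t : PTree) (rest : List PTree) (j : ℕ) (hj : j < (heightList t).length) :
    (F (t :: rest)).getD j 0 = H t j + 1 := by
  rw [F_cons, List.getD_append _ _ _ _ (by simpa using hj), getD_map_add_one _ _ hj, H]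

lemma getD_F_cons_ge (t : PTree) (rest : List PTree) (j : ℕ) (hj : (heightList t).length ≤ j) :
    (F (t :: rest)).getD j 0 = (F rest).getD (j - (heightList t).length) 0 := by
  rw [F_cons, List.getD_append_right _ _ _ _ (by simpa using hj)]
  simp

lemma main_F (m : ℕ) (hm : 1 ≤ m) : ∀ (ts : List PTree),
    (∀ t ∈ ts, ∀ j, m + H t (j+1) ≤ H t j → ∃ h, h + m ≤ H t j ∧ 1 ≤ B m h t) →
    ∀ j, j + 1 < (F ts).length → m + (F ts).getD (j+1) 0 ≤ (F ts).getD j 0 →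
    ∃ h, h + m < (F ts).getD j 0 ∧ ∃ t ∈ ts, 1 ≤ B m h t := by
  intro ts
  induction ts with
  | nil => intro _ j hj _; rw [F_nil] at hj; simp at hj
  | cons t rest ihl =>
    intro hts j hj hjump
    have hL1 : 1 ≤ (heightList t).length := one_le_length_heightList t
    have hlen : (F (t :: rest)).length = (heightList t).length + (F rest).length := by
      rw [F_cons]; simp
    rcases lt_trichotomy (j+1) (heightList t).length with h1 | h1 | h1
    · rw [getD_F_cons_lt t rest j (by omega), getD_F_cons_lt t rest (j+1) h1] at hjump
      have hj2 : m + H t (j+1) ≤ H t j := by omega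
      obtain ⟨h, hh, hB⟩ := hts t (by simp) j hj2
      refine ⟨h, ?_, t, by simp, hB⟩
      rw [getD_F_cons_lt t rest j (by omega)]
      omega
    · have ej : (F (t :: rest)).getD j 0 = R t + 1 := by
        rw [getD_F_cons_lt t rest j (by omega),
          show j = (heightList t).length - 1 from by omega, H_last]
      have ej1 : (F (t :: rest)).getD (j+1) 0 = (F rest).getD 0 0 := by
        rw [getD_F_cons_ge t rest (j+1) (le_of_eq h1.symm), h1, Nat.sub_self]
      rw [ej, ej1] at hjump
      have hFr : 1 ≤ (F rest).getD 0 0 := F_entry_pos rest 0 (by omega)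
      refine ⟨0, ?_, t, by simp, ?_⟩
      · rw [ej]; omega
      · rw [B_zero, if_pos (show m ≤ R t from by omega)]
    · rw [getD_F_cons_ge t rest j (by omega), getD_F_cons_ge t rest (j+1) (by omega),
        show j + 1 - (heightList t).length = (j - (heightList t).length) + 1 from by omega]
        at hjump
      obtain ⟨h, hh, t'', ht'', hB⟩ :=
        ihl (fun s hs => hts s (by simp [hs])) (j - (heightList t).length) (by omega) hjump
      refine ⟨h, ?_, t'', by simp [ht''], hB⟩
      rw [getD_F_cons_ge t rest j (by omega)]
      exact hh

lemma main_lemma (m : ℕ) (hm : 1 ≤ m) :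
    ∀ (t : PTree) (i : ℕ), m + H t (i+1) ≤ H t i → ∃ h, h + m ≤ H t i ∧ 1 ≤ B m h t := by
  refine ind' (fun ts ih => fun i hjump => ?_)
  cases i with
  | zero => rw [H_zero] at hjump; omega
  | succ j =>
    rw [H_succ] at hjump ⊢
    rw [H_succ] at hjump
    have hpos : 1 ≤ (F ts).getD j 0 := by omega
    have hjlt : j < (F ts).length := by
      by_contra hc
      rw [List.getD_eq_default _ _ (le_of_not_gt hc)] at hpos
      omega
    rcases lt_or_ge (j+1) (F ts).length with h1 | h1
    · rcases main_F m hm ts (fun s hs => ih s hs) j h1 hjump with ⟨h, hh, t'', ht'', hB⟩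
      refine ⟨h + 1, by omega, ?_⟩
      rw [B_succ]
      exact le_trans hB (le_sum_map ht'')
    · have hj1 : j + 1 = (F ts).length := by omega
      have hiF : (F ts).getD j 0 = R (node ts) := by
        have hlen : (heightList (node ts)).length = (F ts).length + 1 := by
          rw [heightList_node']; simp
        have := H_last (node ts)
        rw [hlen, show (F ts).length + 1 - 1 = (F ts).length from by omega, ← hj1, H_succ] at this
        exact this
      have hnext : (F ts).getD (j+1) 0 = 0 := List.getD_eq_default _ _ (le_of_eq hj1.symm)
      rw [hiF] at hjump ⊢
      refine ⟨0, by omega, ?_⟩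
      rw [B_zero, if_pos (by omega)]

lemma combinat (t : PTree) (n m : ℕ) (hm : 2 ≤ m) (hn : size t ≤ n) (i : ℕ)
    (habs : (m : ℤ) ≤ |(H t i : ℤ) - (H t (i+1) : ℤ)|) : ∃ h, h < n ∧ 1 ≤ B m h t := by
  have hstep := H_step t i
  have habs' := le_abs.mp habs
  have hjump : m + H t (i+1) ≤ H t i := by omega
  rcases main_lemma m (by omega) t i hjump with ⟨h, hh, hB⟩
  have hle := H_le_self t i
  have hipos : 1 ≤ H t i := by omega
  have hilt : i < (heightList t).length := lt_length_of_H_pos t hipos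
  rw [length_heightList] at hilt
  exact ⟨h, by omega, hB⟩

end PTree

open scoped ENNReal

namespace PTree

lemma meas_ptree {X : Type*} [MeasurableSpace X] (f : PTree → X) : Measurable f :=
  fun _ _ => MeasurableSpace.measurableSet_top

lemma mp_eval (P : Measure PTree) [IsProbabilityMeasure P] (k : ℕ) (c : Fin k) :
    MeasurePreserving (fun ts : Fin k → PTree => ts c) (Measure.pi fun _ => P) P := by
  refine ⟨measurable_pi_apply c, ?_⟩
  ext s hs
  rw [Measure.map_apply (measurable_pi_apply c) hs, Set.eval_preimage, Measure.pi_pi]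
  rw [Finset.prod_eq_single_of_mem c (Finset.mem_univ c)
    (fun b _ hb => by simp [Function.update_of_ne hb])]
  simp

lemma lint_eval (P : Measure PTree) [IsProbabilityMeasure P] (k : ℕ) (c : Fin k)
    (f : PTree → ℝ≥0∞) :
    ∫⁻ ts : Fin k → PTree, f (ts c) ∂(Measure.pi fun _ => P) = ∫⁻ t, f t ∂P :=
  (mp_eval P k c).lintegral_comp (meas_ptree f)

lemma getLast_ofFn_ptree (k : ℕ) (ts : Fin (k+1) → PTree) :
    (List.ofFn ts).getLast (by simp) = ts (Fin.last k) := by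
  rw [List.getLast_eq_getElem, List.getElem_ofFn]
  congr 1
  simp [Fin.ext_iff]

lemma R_node_ofFn (k : ℕ) (ts : Fin (k+1) → PTree) :
    R (node (List.ofFn ts)) = R (ts (Fin.last k)) + 1 := by
  rw [R_node _ (by simp), getLast_ofFn_ptree]

end PTree

section Probab

open PTree

variable (μ : ℕ → ℝ) (hμ : ∀ k, 0 ≤ μ k) (hμsum : HasSum μ 1)
  (hcrit : HasSum (fun k : ℕ => (k : ℝ) * μ k) 1)
  (P : Measure PTree) [IsProbabilityMeasure P]
  (hbranch : ∀ f : PTree → ENNReal,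
      ∫⁻ t, f t ∂P
        = ∑' k : ℕ, ENNReal.ofReal (μ k)
            * ∫⁻ ts : Fin k → PTree, f (.node (List.ofFn ts)) ∂(Measure.pi fun _ => P))

include hμ hμsum in
lemma sum_tail : (∑' k : ℕ, ENNReal.ofReal (μ (k+1))) = ENNReal.ofReal (1 - μ 0) := by
  have hS1 : (∑' k : ℕ, ENNReal.ofReal (μ k)) = 1 := by
    rw [← ENNReal.ofReal_tsum_of_nonneg hμ hμsum.summable, hμsum.tsum_eq, ENNReal.ofReal_one]
  have hsplit := tsum_eq_zero_add' (f := fun k => ENNReal.ofReal (μ k)) ENNReal.summable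
  rw [hS1] at hsplit
  have : (∑' k : ℕ, ENNReal.ofReal (μ (k+1))) = 1 - ENNReal.ofReal (μ 0) := by
    rw [hsplit, ENNReal.add_sub_cancel_left ENNReal.ofReal_ne_top]
  rw [this, ← ENNReal.ofReal_one, ← ENNReal.ofReal_sub 1 (hμ 0)]

include hμ hcrit in
lemma sum_crit : (∑' k : ℕ, ENNReal.ofReal (μ k) * k) = 1 := by
  have e : ∀ k : ℕ, ENNReal.ofReal (μ k) * k = ENNReal.ofReal ((k : ℝ) * μ k) := fun k => by
    rw [ENNReal.ofReal_mul (Nat.cast_nonneg k), ENNReal.ofReal_natCast, mul_comm]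
  rw [tsum_congr e, ← ENNReal.ofReal_tsum_of_nonneg
    (fun k => mul_nonneg (Nat.cast_nonneg k) (hμ k)) hcrit.summable, hcrit.tsum_eq,
    ENNReal.ofReal_one]

include hμ hμsum hbranch in
lemma P_R_ge (j : ℕ) : P {t | j ≤ R t} = ENNReal.ofReal (1 - μ 0) ^ j := by
  induction j with
  | zero => simpa using measure_univ
  | succ j ih =>
    have hb := hbranch (Set.indicator {t | j + 1 ≤ R t} 1)
    rw [lintegral_indicator_one (MeasurableSpace.measurableSet_top)] at hb
    have hA0 : (∫⁻ ts : Fin 0 → PTree,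
        Set.indicator {t | j + 1 ≤ R t} 1 (node (List.ofFn ts)) ∂(Measure.pi fun _ => P)) = 0 := by
      have : ∀ ts : Fin 0 → PTree,
          Set.indicator {t | j + 1 ≤ R t} (1 : PTree → ℝ≥0∞) (node (List.ofFn ts)) = 0 := by
        intro ts
        apply Set.indicator_of_notMem
        rw [List.ofFn_zero]
        simp [R]
      simp only [this, lintegral_const, zero_mul]
    have hAk : ∀ k : ℕ, (∫⁻ ts : Fin (k+1) → PTree,
        Set.indicator {t | j + 1 ≤ R t} 1 (node (List.ofFn ts)) ∂(Measure.pi fun _ => P))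
        = P {t | j ≤ R t} := by
      intro k
      have e : (fun ts : Fin (k+1) → PTree =>
          Set.indicator {t | j + 1 ≤ R t} (1 : PTree → ℝ≥0∞) (node (List.ofFn ts)))
          = fun ts => Set.indicator {t | j ≤ R t} (1 : PTree → ℝ≥0∞) (ts (Fin.last k)) := by
        funext ts
        have hR := R_node_ofFn k ts
        by_cases hmem : j ≤ R (ts (Fin.last k))
        · rw [Set.indicator_of_mem (show node (List.ofFn ts) ∈ {t | j + 1 ≤ R t} from by
              simp only [Set.mem_setOf_eq, hR]; omega),
            Set.indicator_of_mem (show ts (Fin.last k) ∈ {t | j ≤ R t} from hmem)]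
          rfl
        · rw [Set.indicator_of_notMem (show node (List.ofFn ts) ∉ {t | j + 1 ≤ R t} from by
              simp only [Set.mem_setOf_eq, hR]; omega),
            Set.indicator_of_notMem (show ts (Fin.last k) ∉ {t | j ≤ R t} from hmem)]
      rw [e, lint_eval P (k+1) (Fin.last k), lintegral_indicator_one (MeasurableSpace.measurableSet_top)]
    rw [tsum_eq_zero_add' ENNReal.summable, hA0, mul_zero, zero_add] at hb
    have : (∑' k : ℕ, ENNReal.ofReal (μ (k+1)) * (∫⁻ ts : Fin (k+1) → PTree,
        Set.indicator {t | j + 1 ≤ R t} 1 (node (List.ofFn ts)) ∂(Measure.pi fun _ => P)))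
        = (∑' k : ℕ, ENNReal.ofReal (μ (k+1))) * P {t | j ≤ R t} := by
      rw [← ENNReal.tsum_mul_right]
      exact tsum_congr fun k => by rw [hAk k]
    rw [this, sum_tail μ hμ hμsum, ih] at hb
    rw [hb, pow_succ, mul_comm]

include hμ hμsum hcrit hbranch in
lemma lint_B (m : ℕ) : ∀ h : ℕ,
    (∫⁻ t, (B m h t : ℝ≥0∞) ∂P) = ENNReal.ofReal (1 - μ 0) ^ m := by
  intro h
  induction h with
  | zero =>
    have e : (fun t => ((B m 0 t : ℕ) : ℝ≥0∞)) = Set.indicator {t | m ≤ R t} 1 := by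
      funext t
      rw [B_zero]
      by_cases hmem : m ≤ R t
      · rw [if_pos hmem, Set.indicator_of_mem (show t ∈ {t | m ≤ R t} from hmem)]; simp
      · rw [if_neg hmem, Set.indicator_of_notMem (show t ∉ {t | m ≤ R t} from hmem)]; simp
    rw [e]
    exact (lintegral_indicator_one MeasurableSpace.measurableSet_top).trans
      (P_R_ge μ hμ hμsum P hbranch m)
  | succ h ih =>
    have hb := hbranch (fun t => (B m (h+1) t : ℝ≥0∞))
    have hAk : ∀ k : ℕ, (∫⁻ ts : Fin k → PTree,
        ((B m (h+1) (node (List.ofFn ts)) : ℕ) : ℝ≥0∞) ∂(Measure.pi fun _ => P))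
        = k * ∫⁻ t, (B m h t : ℝ≥0∞) ∂P := by
      intro k
      have e : ∀ ts : Fin k → PTree, ((B m (h+1) (node (List.ofFn ts)) : ℕ) : ℝ≥0∞)
          = ∑ c : Fin k, ((B m h (ts c) : ℕ) : ℝ≥0∞) := by
        intro ts
        rw [B_succ, List.map_ofFn, List.sum_ofFn, Nat.cast_sum]
        rfl
      rw [lintegral_congr e, lintegral_finset_sum _ (fun c _ =>
        (show Measurable fun a : Fin k → PTree => ((B m h (a c) : ℕ) : ℝ≥0∞) from
          (meas_ptree (fun t => ((B m h t : ℕ) : ℝ≥0∞))).comp (measurable_pi_apply c)))]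
      have : ∀ c : Fin k, (∫⁻ ts : Fin k → PTree,
          ((B m h (ts c) : ℕ) : ℝ≥0∞) ∂(Measure.pi fun _ => P)) = ∫⁻ t, (B m h t : ℝ≥0∞) ∂P :=
        fun c => lint_eval P k c (fun t => ((B m h t : ℕ) : ℝ≥0∞))
      rw [Finset.sum_congr rfl (fun c _ => this c), Finset.sum_const, Finset.card_univ,
        Fintype.card_fin, nsmul_eq_mul]
    have : (∑' k : ℕ, ENNReal.ofReal (μ k) * (∫⁻ ts : Fin k → PTree,
        ((B m (h+1) (node (List.ofFn ts)) : ℕ) : ℝ≥0∞) ∂(Measure.pi fun _ => P)))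
        = (∑' k : ℕ, ENNReal.ofReal (μ k) * k) * ∫⁻ t, (B m h t : ℝ≥0∞) ∂P := by
      rw [← ENNReal.tsum_mul_right]
      exact tsum_congr fun k => by rw [hAk k, mul_assoc]
    rw [this, sum_crit μ hμ hcrit, one_mul, ih] at hb
    exact hb

end Probab



/-- Let `μ` be a critical non-trivial offspring distribution and `τ` a
Galton–Watson tree with offspring law `μ` (expressed by the branching identity `hbranch`).
For all integers `n, m ≥ 2`,
`P(#τ ≤ n and sup_i |H_i(τ) - H_{i+1}(τ)| ≥ m) ≤ n·(1 - μ(0))^m`. -/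
theorem stmt_10 (μ : ℕ → ℝ) (hμ : ∀ k, 0 ≤ μ k) (hμsum : HasSum μ 1)
    (h₀ : 0 < μ 0) (hcrit : HasSum (fun k : ℕ => (k : ℝ) * μ k) 1)
    (P : Measure PTree) [IsProbabilityMeasure P]
    (hbranch : ∀ f : PTree → ENNReal,
      ∫⁻ t, f t ∂P
        = ∑' k : ℕ, ENNReal.ofReal (μ k)
            * ∫⁻ ts : Fin k → PTree, f (.node (List.ofFn ts)) ∂(Measure.pi fun _ => P))
    (n m : ℕ) (hn : 2 ≤ n) (hm : 2 ≤ m) :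
    P {t : PTree | t.size ≤ n
          ∧ ∃ i : ℕ, (m : ℤ) ≤ |(t.H i : ℤ) - (t.H (i+1) : ℤ)|}
      ≤ ENNReal.ofReal ((n : ℝ) * (1 - μ 0) ^ m) := by
  have hμ0le : μ 0 ≤ 1 := le_hasSum hμsum 0 (fun i _ => hμ i)
  have h1μ : (0:ℝ) ≤ 1 - μ 0 := by linarith
  have hsub : {t : PTree | t.size ≤ n
          ∧ ∃ i : ℕ, (m : ℤ) ≤ |(t.H i : ℤ) - (t.H (i+1) : ℤ)|}
      ⊆ ⋃ h ∈ Finset.range n, {t : PTree | 1 ≤ PTree.B m h t} := by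
    rintro t ⟨hsize, i, habs⟩
    obtain ⟨h, hlt, hB⟩ := PTree.combinat t n m hm hsize i habs
    exact Set.mem_biUnion (Finset.mem_range.mpr hlt) hB
  have hmarkov : ∀ h : ℕ, P {t : PTree | 1 ≤ PTree.B m h t} ≤ ENNReal.ofReal (1 - μ 0) ^ m := by
    intro h
    have h1 := mul_meas_ge_le_lintegral₀ (μ := P)
      (f := fun t => ((PTree.B m h t : ℕ) : ℝ≥0∞)) (PTree.meas_ptree _).aemeasurable 1
    rw [one_mul] at h1
    have hset : {x : PTree | (1:ℝ≥0∞) ≤ ((PTree.B m h x : ℕ) : ℝ≥0∞)}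
        = {t : PTree | 1 ≤ PTree.B m h t} := by
      ext t; simp [Nat.one_le_cast]
    rw [hset] at h1
    exact h1.trans_eq (lint_B μ hμ hμsum hcrit P hbranch m h)
  calc P {t : PTree | t.size ≤ n
          ∧ ∃ i : ℕ, (m : ℤ) ≤ |(t.H i : ℤ) - (t.H (i+1) : ℤ)|}
      ≤ P (⋃ h ∈ Finset.range n, {t : PTree | 1 ≤ PTree.B m h t}) := measure_mono hsub
    _ ≤ ∑ h ∈ Finset.range n, P {t : PTree | 1 ≤ PTree.B m h t} :=
        measure_biUnion_finset_le _ _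
    _ ≤ ∑ _h ∈ Finset.range n, ENNReal.ofReal (1 - μ 0) ^ m :=
        Finset.sum_le_sum (fun h _ => hmarkov h)
    _ = n * ENNReal.ofReal (1 - μ 0) ^ m := by
        rw [Finset.sum_const, Finset.card_range, nsmul_eq_mul]
    _ = ENNReal.ofReal ((n : ℝ) * (1 - μ 0) ^ m) := by
        rw [ENNReal.ofReal_mul (by positivity), ENNReal.ofReal_natCast,
          ENNReal.ofReal_pow h1μ]
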